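/- Let n, a, t be positive integers and let F(q) = ∑_{d∣n} μ(d) · ∏_{j=1}^{n/d} (1 + q^{jd} + q^{2jd} + ⋯ + q^{(a−1)jd}) ∈ ℤ[q]. Then the value of F at ζ_n^t, where ζ_n = e^{2πi/n}, equals ∑_{d∣n, gcd(ta, n/d) = gcd(t, n/d)} μ(d) · a^{gcd(n/d, t)}, the sum being over positive divisors d of n satisfying gcd(ta, n/d) = gcd(t, n/d). -/

import Mathlib

open Polynomial ArithmeticFunction Finset Complex

private lemma geom_sum_zero' {a : ℕ} {x : ℂ} (hx : x ≠ 1) (hxa : x ^ a = 1) :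
    ∑ k ∈ Finset.range a, x ^ k = 0 := by
  rw [geom_sum_eq hx, hxa, sub_self, zero_div]

private lemma gcd_cond_iff {a t m : ℕ} (ht : 0 < t) :
    Nat.gcd (t * a) m = Nat.gcd t m ↔ Nat.Coprime a (m / Nat.gcd t m) := by
  have hg : 0 < Nat.gcd t m := Nat.gcd_pos_of_pos_left m ht
  set g := Nat.gcd t m with hgdef
  have ht' : g * (t / g) = t := Nat.mul_div_cancel' (Nat.gcd_dvd_left t m)
  have hm' : g * (m / g) = m := Nat.mul_div_cancel' (Nat.gcd_dvd_right t m)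
  have cop : (t / g).Coprime (m / g) := Nat.coprime_div_gcd_div_gcd hg
  have key : Nat.gcd (t * a) m = g * Nat.gcd a (m / g) := by
    conv_lhs => rw [← ht', ← hm']
    rw [mul_assoc, Nat.gcd_mul_left, cop.gcd_mul_left_cancel a]
  constructor
  · intro h
    rw [key] at h
    exact Nat.eq_of_mul_eq_mul_left hg (h.trans (mul_one g).symm)
  · intro h
    rw [key, h, mul_one]

private lemma prod_factor {z : ℂ} {n : ℕ} (hz : IsPrimitiveRoot z n) (hn : 0 < n)
    {d : ℕ} (hd : d ∣ n) (hd0 : 0 < d) {a t : ℕ} (ha : 0 < a) (ht : 0 < t) :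
    ∏ j ∈ Finset.Icc 1 (n / d), ∑ k ∈ Finset.range a, (z ^ t) ^ (k * j * d) =
      if Nat.gcd (t * a) (n / d) = Nat.gcd t (n / d) then (a : ℂ) ^ Nat.gcd (n / d) t
      else 0 := by
  set m := n / d with hmdef
  have hm0 : 0 < m := Nat.div_pos (Nat.le_of_dvd hn hd) hd0
  have hnm : d * m = n := Nat.mul_div_cancel' hd
  have hg0 : 0 < Nat.gcd t m := Nat.gcd_pos_of_pos_left m ht
  set g := Nat.gcd t m with hgdef
  set t' := t / g with ht'def
  set m' := m / g with hm'def
  have htg : g * t' = t := Nat.mul_div_cancel' (Nat.gcd_dvd_left t m)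
  have hmg : g * m' = m := Nat.mul_div_cancel' (Nat.gcd_dvd_right t m)
  have hm'0 : 0 < m' := by
    rcases Nat.eq_zero_or_pos m' with h | h
    · rw [h, mul_zero] at hmg; omega
    · exact h
  have cop : t'.Coprime m' := Nat.coprime_div_gcd_div_gcd hg0
  set e : ℕ → ℂ := fun j => (z ^ t) ^ (j * d) with hedef
  have hpow : ∀ x y, e (x * y) = (e x) ^ y := by
    intro x y
    simp only [hedef, ← pow_mul]
    congr 1
    ring
  have hadd : ∀ x y, e (x + y) = e x * e y := by
    intro x y
    simp only [hedef, add_mul, pow_add]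
  have he1 : ∀ j, e j = 1 ↔ m' ∣ j := by
    intro j
    have h2 : e j = z ^ (t * (j * d)) := by
      simp only [hedef, ← pow_mul]
    rw [h2, hz.pow_eq_one_iff_dvd]
    have h3 : t * (j * d) = (d * g) * (j * t') := by rw [← htg]; ring
    have h4 : n = (d * g) * m' := by rw [← hnm, ← hmg]; ring
    rw [h3, h4, Nat.mul_dvd_mul_iff_left (by positivity : 0 < d * g)]
    exact cop.symm.dvd_mul_right
  have hem' : e m' = 1 := (he1 m').2 dvd_rfl
  have hper : ∀ j, e j = e (j % m') := by
    intro j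
    conv_lhs => rw [← Nat.div_add_mod j m']
    rw [hadd, hpow, hem', one_pow, one_mul]
  have hsum : ∀ j, (∑ k ∈ Finset.range a, (z ^ t) ^ (k * j * d))
      = ∑ k ∈ Finset.range a, (e j) ^ k := by
    intro j
    refine Finset.sum_congr rfl fun k _ => ?_
    rw [← hpow]
    simp only [hedef]
    congr 1
    ring
  have hprodeq : (∏ j ∈ Finset.Icc 1 m, ∑ k ∈ Finset.range a, (z ^ t) ^ (k * j * d))
      = ∏ j ∈ Finset.Icc 1 m, ∑ k ∈ Finset.range a, (e j) ^ k :=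
    Finset.prod_congr rfl fun j _ => hsum j
  have hm'm : m' ∣ m := ⟨g, by rw [← hmg]; ring⟩
  by_cases hcond : Nat.gcd (t * a) m = Nat.gcd t m
  · rw [if_pos hcond, hprodeq]
    have hca : Nat.Coprime a m' := (gcd_cond_iff ht).1 hcond
    rw [← Finset.prod_filter_mul_prod_filter_not (Finset.Icc 1 m) (fun j => m' ∣ j)]
    have h1 : (∏ j ∈ (Finset.Icc 1 m).filter (fun j => m' ∣ j),
        ∑ k ∈ Finset.range a, (e j) ^ k) = (a : ℂ) ^ g := by
      have hc : ∀ j ∈ (Finset.Icc 1 m).filter (fun j => m' ∣ j),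
          (∑ k ∈ Finset.range a, (e j) ^ k) = (a : ℂ) := by
        intro j hj
        rw [(he1 j).2 (Finset.mem_filter.mp hj).2]
        simp
      rw [Finset.prod_congr rfl hc, Finset.prod_const]
      congr 1
      rw [show Finset.Icc 1 m = Finset.Ioc 0 m from Finset.Icc_add_one_left_eq_Ioc 0 m,
        Nat.Ioc_filter_dvd_card_eq_div, ← hmg, Nat.mul_div_cancel _ hm'0]
    have h2 : (∏ j ∈ (Finset.Icc 1 m).filter (fun j => ¬ m' ∣ j),
        ∑ k ∈ Finset.range a, (e j) ^ k) = 1 := by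
      set T := (Finset.Icc 1 m).filter (fun j => ¬ m' ∣ j) with hT
      have hne : ∀ j ∈ T, e j ≠ 1 := fun j hj h =>
        (Finset.mem_filter.mp hj).2 ((he1 j).1 h)
      have step : ∀ j ∈ T, (∑ k ∈ Finset.range a, (e j) ^ k)
          = (e (j * a) - 1) / (e j - 1) := by
        intro j hj
        rw [geom_sum_eq (hne j hj), hpow]
      rw [Finset.prod_congr rfl step, Finset.prod_div_distrib]
      have numden : (∏ j ∈ T, (e (j * a) - 1)) = ∏ j ∈ T, (e j - 1) := by
        rcases eq_or_lt_of_le (show 1 ≤ m' from hm'0) with h1' | hm'1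
        · have hTe : T = ∅ := by
            rw [hT]
            refine Finset.filter_false_of_mem fun j hj => ?_
            rw [← h1']
            simp
          simp [hTe]
        · obtain ⟨b, -, hb⟩ := Nat.exists_mul_mod_eq_one_of_coprime hca hm'1
          have hb' : a * b ≡ 1 [MOD m'] := by
            show a * b % m' = 1 % m'
            rw [hb, Nat.mod_eq_of_lt hm'1]
          have hb'' : b * a ≡ 1 [MOD m'] := by rwa [mul_comm]
          have hmodeq : ∀ j x : ℕ, (m' * (j / m') + x % m') % m' = x % m' := by
            intro j x
            rw [Nat.mul_add_mod, Nat.mod_mod_of_dvd _ dvd_rfl]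
          have mem : ∀ c : ℕ, ∀ j ∈ T, ¬ m' ∣ j * c →
              (m' * (j / m') + (j * c) % m') ∈ T := by
            intro c j hj hndvd
            obtain ⟨hj', hjd⟩ := Finset.mem_filter.mp hj
            obtain ⟨hj1, hjm⟩ := Finset.mem_Icc.mp hj'
            have hr : (j * c) % m' ≠ 0 := fun h =>
              hndvd (Nat.dvd_iff_mod_eq_zero.mpr h)
            have hrlt : (j * c) % m' < m' := Nat.mod_lt _ hm'0
            have hjltm : j < m :=
              lt_of_le_of_ne hjm (fun h => hjd (h ▸ hm'm))
            have hq : j / m' < g := by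
              rw [Nat.div_lt_iff_lt_mul hm'0]
              rw [← hmg] at hjltm
              omega
            have hub : m' * (j / m') + (j * c) % m' < m := by
              calc m' * (j / m') + (j * c) % m' < m' * (j / m') + m' := by omega
                _ = m' * (j / m' + 1) := by ring
                _ ≤ m' * g := Nat.mul_le_mul_left m' hq
                _ = m := by rw [← hmg]; ring
            refine Finset.mem_filter.mpr ⟨Finset.mem_Icc.mpr ⟨by omega, le_of_lt hub⟩, ?_⟩
            intro hdvd
            have h0 : (m' * (j / m') + (j * c) % m') % m' = 0 :=
              Nat.dvd_iff_mod_eq_zero.mp hdvd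
            rw [hmodeq] at h0
            exact hr h0
          have comp : ∀ c c' : ℕ, c * c' ≡ 1 [MOD m'] → ∀ j : ℕ,
              m' * ((m' * (j / m') + (j * c) % m') / m')
                + ((m' * (j / m') + (j * c) % m') * c') % m' = j := by
            intro c c' hcc' j
            have hd1 : (m' * (j / m') + (j * c) % m') / m' = j / m' := by
              rw [Nat.mul_add_div hm'0, Nat.div_eq_of_lt (Nat.mod_lt _ hm'0), add_zero]
            have h3 : ((j * c) % m') * c' ≡ j [MOD m'] := by
              calc ((j * c) % m') * c' ≡ (j * c) * c' [MOD m'] :=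
                    (Nat.mod_modEq (j * c) m').mul_right c'
                _ = j * (c * c') := by ring
                _ ≡ j * 1 [MOD m'] := Nat.ModEq.mul_left j hcc'
                _ = j := mul_one j
            have hm1 : ((m' * (j / m') + (j * c) % m') * c') % m' = j % m' := by
              have e1 : (m' * (j / m') + (j * c) % m') * c'
                  = m' * (j / m' * c') + ((j * c) % m') * c' := by ring
              rw [e1, Nat.mul_add_mod]
              exact h3
            rw [hd1, hm1, Nat.div_add_mod]
          have hndvd_a : ∀ j ∈ T, ¬ m' ∣ j * a := by
            intro j hj h
            exact (Finset.mem_filter.mp hj).2 ((hca.symm.dvd_mul_right).mp h)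
          have hndvd_b : ∀ j ∈ T, ¬ m' ∣ j * b := by
            intro j hj h
            apply (Finset.mem_filter.mp hj).2
            have h2' : m' ∣ j * (a * b) := by
              rw [show j * (a * b) = (j * b) * a by ring]
              exact h.mul_right a
            have h3 : j ≡ j * (a * b) [MOD m'] := by
              calc j = j * 1 := (mul_one j).symm
                _ ≡ j * (a * b) [MOD m'] := (Nat.ModEq.mul_left j hb').symm
            exact (Nat.modEq_zero_iff_dvd).mp
              (h3.trans ((Nat.modEq_zero_iff_dvd).mpr h2'))
          refine Finset.prod_nbij' (fun j => m' * (j / m') + (j * a) % m')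
            (fun j => m' * (j / m') + (j * b) % m') ?_ ?_ ?_ ?_ ?_
          · intro j hj; exact mem a j hj (hndvd_a j hj)
          · intro j hj; exact mem b j hj (hndvd_b j hj)
          · intro j _; exact comp a b hb' j
          · intro j _; exact comp b a hb'' j
          · intro j _
            congr 1
            rw [hper (m' * (j / m') + (j * a) % m'), hmodeq j (j * a), ← hper (j * a)]
      rw [numden]
      apply div_self
      apply Finset.prod_ne_zero_iff.mpr
      intro j hj
      exact sub_ne_zero.mpr (hne j hj)
    rw [h1, h2, mul_one, Nat.gcd_comm m t]
  · rw [if_neg hcond, hprodeq]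
    have hca : ¬ Nat.Coprime a m' := fun h => hcond ((gcd_cond_iff ht).2 h)
    have hgcd0 : 0 < Nat.gcd a m' := Nat.gcd_pos_of_pos_left m' ha
    set c := Nat.gcd a m' with hcdef
    have hc1 : 1 < c := by
      rcases Nat.lt_or_ge c 2 with h | h
      · exact absurd (by omega : c = 1) hca
      · omega
    set j0 := m' / c with hj0def
    have hcm' : c ∣ m' := Nat.gcd_dvd_right a m'
    have hca' : c ∣ a := Nat.gcd_dvd_left a m'
    have hj00 : 0 < j0 := Nat.div_pos (Nat.le_of_dvd hm'0 hcm') (by omega)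
    have hj0lt : j0 < m' := Nat.div_lt_self hm'0 hc1
    apply Finset.prod_eq_zero (i := j0)
    · refine Finset.mem_Icc.mpr ⟨hj00, ?_⟩
      exact le_trans (le_of_lt hj0lt) (Nat.le_of_dvd hm0 hm'm)
    · have hne : e j0 ≠ 1 := by
        intro h
        exact absurd (Nat.le_of_dvd hj00 ((he1 j0).1 h)) (not_le.2 hj0lt)
      have hdvd : m' ∣ j0 * a := by
        refine ⟨a / c, ?_⟩
        calc j0 * a = (m' / c) * (c * (a / c)) := by rw [Nat.mul_div_cancel' hca']
          _ = ((m' / c) * c) * (a / c) := by ring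
          _ = m' * (a / c) := by rw [Nat.div_mul_cancel hcm']
      have hpowa : (e j0) ^ a = 1 := by
        rw [← hpow, he1]
        exact hdvd
      exact geom_sum_zero' hne hpowa

/-- Let `F(q) = ∑_{d∣n} μ(d) ∏_{j=1}^{n/d} (1 + q^{jd} + ⋯ + q^{(a−1)jd}) ∈ ℤ[q]`. Then
`F(ζ_n^t) = ∑_{d∣n, gcd(ta,n/d)=gcd(t,n/d)} μ(d) a^{gcd(n/d,t)}`. -/
theorem F_at_root_eq_sum (n a t : ℕ) (hn : 0 < n) (ha : 0 < a) (ht : 0 < t) :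
    Polynomial.aeval (Complex.exp (2 * Real.pi * Complex.I / n) ^ t)
      (∑ d ∈ n.divisors, Polynomial.C ((moebius d : ℤ)) *
        ∏ j ∈ Finset.Icc 1 (n / d),
          ∑ k ∈ Finset.range a, (Polynomial.X : Polynomial ℤ) ^ (k * j * d)) =
      ∑ d ∈ n.divisors.filter
          (fun d => Nat.gcd (t * a) (n / d) = Nat.gcd t (n / d)),
        (moebius d : ℂ) * (a : ℂ) ^ (Nat.gcd (n / d) t) := by
  have hζ := Complex.isPrimitiveRoot_exp n hn.ne'
  simp only [map_sum, map_mul, map_prod, aeval_C, map_intCast, map_pow, aeval_X, eq_intCast]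
  rw [Finset.sum_filter]
  refine Finset.sum_congr rfl fun d hd => ?_
  have hdvd : d ∣ n := (Nat.mem_divisors.mp hd).1
  have hd0 : 0 < d := Nat.pos_of_mem_divisors hd
  rw [prod_factor hζ hn hdvd hd0 ha ht]
  split_ifs with h
  · rfl
  · rw [mul_zero]
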